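/- Fix an integer W ≥ 2. For each d ∈ {2, …, W}, let α_d, β_d ∈ (0,1) with β_d < α_d, and let K_d be a nonnegative integer; let p ∈ [0,1], θ ∈ (0,1/2), and let L be a nonnegative integer. Let {A_{d,j}}, {B_{d,j}}, {P_i}, {Θ_i} be mutually independent with A_{d,j} ~ Bern(α_d), B_{d,j} ~ Bern(β_d) for j = 1, …, K_d, and P_i ~ Bern(p), Θ_i ~ Bern(θ) for i = 1, …, L. Let n ≥ 2 and ε > 0 satisfy Σ_{d=2}^{W} K_d · I(α_d,β_d) + L · p · I_θ ≥ (1+ε) log n. Then for every τ with 0 < τ ≤ ε, P( Σ_{d=2}^{W} a(α_d,β_d) Σ_{j=1}^{K_d} (B_{d,j} − A_{d,j}) + b(θ) Σ_{i=1}^{L} P_i (2Θ_i − 1) ≥ −τ log n ) ≤ n^{τ/2 − 1 − ε} ≤ n^{−(1 + ε/2)}. -/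

import Mathlib

open MeasureTheory ProbabilityTheory

/-- The Bernoulli distribution on `ℝ` with mean `q`. -/
noncomputable def bern (q : ℝ) : Measure ℝ :=
  (ENNReal.ofReal q) • Measure.dirac 1 + (ENNReal.ofReal (1 - q)) • Measure.dirac 0

/-- `a(α,β) = log (α(1-β) / (β(1-α)))`. -/
noncomputable def aQ (α β : ℝ) : ℝ := Real.log (α * (1 - β) / (β * (1 - α)))

/-- `I(α,β) = (√α - √β)²`. -/
noncomputable def IQ (α β : ℝ) : ℝ := (Real.sqrt α - Real.sqrt β) ^ 2

/-- `b(θ) = log ((1-θ)/θ)`. -/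
noncomputable def bQ (θ : ℝ) : ℝ := Real.log ((1 - θ) / θ)

/-- `I_θ = (√(1-θ) - √θ)²`. -/
noncomputable def IθQ (θ : ℝ) : ℝ := (Real.sqrt (1 - θ) - Real.sqrt θ) ^ 2

section BernHelpers
variable {Ω : Type*} [MeasurableSpace Ω] {μ : Measure Ω}

lemma isProbabilityMeasure_bern {q : ℝ} (h0 : 0 ≤ q) (h1 : q ≤ 1) :
    IsProbabilityMeasure (bern q) := by
  constructor
  rw [bern]
  simp only [Measure.add_apply, Measure.smul_apply, measure_univ, smul_eq_mul, mul_one]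
  rw [← ENNReal.ofReal_add h0 (by linarith)]
  norm_num

lemma integrable_bern {q : ℝ} (f : ℝ → ℝ) : Integrable f (bern q) := by
  rw [bern]
  refine Integrable.add_measure ?_ ?_ <;>
  · refine Integrable.smul_measure ?_ ENNReal.ofReal_ne_top
    exact (integrable_const _).congr (ae_eq_dirac f).symm

lemma integral_bern {q : ℝ} (h0 : 0 ≤ q) (h1 : q ≤ 1) (f : ℝ → ℝ) :
    ∫ x, f x ∂(bern q) = q * f 1 + (1 - q) * f 0 := by
  have hint : ∀ a : ℝ, Integrable f ((ENNReal.ofReal a) • Measure.dirac (1:ℝ)) := fun a =>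
    ((integrable_const _).congr (ae_eq_dirac f).symm).smul_measure ENNReal.ofReal_ne_top
  have hint0 : ∀ a : ℝ, Integrable f ((ENNReal.ofReal a) • Measure.dirac (0:ℝ)) := fun a =>
    ((integrable_const _).congr (ae_eq_dirac f).symm).smul_measure ENNReal.ofReal_ne_top
  rw [bern, integral_add_measure (hint q) (hint0 (1 - q)), integral_smul_measure,
    integral_smul_measure, integral_dirac, integral_dirac, ENNReal.toReal_ofReal h0,
    ENNReal.toReal_ofReal (by linarith : (0:ℝ) ≤ 1 - q)]
  simp [smul_eq_mul]

lemma aemeasurable_of_map_bern {X : Ω → ℝ} {q : ℝ} (h0 : 0 ≤ q) (h1 : q ≤ 1)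
    (hmap : Measure.map X μ = bern q) : AEMeasurable X μ := by
  by_contra h
  rw [Measure.map_of_not_aemeasurable h] at hmap
  have hbp := isProbabilityMeasure_bern h0 h1
  have h2 : bern q Set.univ = 1 := measure_univ
  rw [← hmap] at h2
  simp at h2

lemma integral_comp_bern {X : Ω → ℝ} {q : ℝ} (h0 : 0 ≤ q) (h1 : q ≤ 1)
    (hmap : Measure.map X μ = bern q) {f : ℝ → ℝ} (hf : Measurable f) :
    Integrable (fun ω => f (X ω)) μ ∧ ∫ ω, f (X ω) ∂μ = q * f 1 + (1 - q) * f 0 := by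
  have hX := aemeasurable_of_map_bern h0 h1 hmap
  constructor
  · have hi : Integrable f (Measure.map X μ) := hmap ▸ integrable_bern f
    exact (integrable_map_measure hf.aestronglyMeasurable hX).mp hi
  · rw [← integral_map hX hf.aestronglyMeasurable, hmap, integral_bern h0 h1]

lemma ae01_of_map_bern {X : Ω → ℝ} {q : ℝ} (h0 : 0 ≤ q) (h1 : q ≤ 1)
    (hmap : Measure.map X μ = bern q) : ∀ᵐ ω ∂μ, X ω = 0 ∨ X ω = 1 := by
  have hX := aemeasurable_of_map_bern h0 h1 hmap
  have hs : MeasurableSet {x : ℝ | ¬(x = 0 ∨ x = 1)} := by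
    have : {x : ℝ | ¬(x = 0 ∨ x = 1)} = ({0, 1} : Set ℝ)ᶜ := by
      ext x; simp [Set.mem_insert_iff]
    rw [this]
    exact (MeasurableSet.insert (measurableSet_singleton 1) 0).compl
  rw [ae_iff]
  have h2 := Measure.map_apply_of_aemeasurable hX hs
  rw [hmap] at h2
  have h3 : X ⁻¹' {x : ℝ | ¬(x = 0 ∨ x = 1)} = {ω | ¬(X ω = 0 ∨ X ω = 1)} := rfl
  rw [h3] at h2
  rw [← h2, bern]
  simp only [Measure.add_apply, Measure.smul_apply, smul_eq_mul]
  rw [Measure.dirac_apply' _ hs, Measure.dirac_apply' _ hs]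
  simp [Set.indicator_apply]
end BernHelpers


lemma iIndepFun_congr_ae {Ω ι : Type*} [MeasurableSpace Ω] {μ : Measure Ω}
    {f g : ι → Ω → ℝ} (h : iIndepFun f μ)
    (hfg : ∀ i, f i =ᵐ[μ] g i) : iIndepFun g μ := by
  rw [iIndepFun_iff_measure_inter_preimage_eq_mul] at h ⊢
  intro S sets hsets
  have hae : ∀ᵐ ω ∂μ, ∀ i ∈ S, f i ω = g i ω := by
    rw [Filter.eventually_all_finset]
    exact fun i _ => hfg i
  have h1 : ∀ i, (f i ⁻¹' sets i : Set Ω) =ᵐ[μ] (g i ⁻¹' sets i : Set Ω) := by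
    intro i
    filter_upwards [hfg i] with ω hω
    change (f i ω ∈ sets i) = (g i ω ∈ sets i)
    rw [hω]
  have h2 : μ (⋂ i ∈ S, g i ⁻¹' sets i) = μ (⋂ i ∈ S, f i ⁻¹' sets i) := by
    apply measure_congr
    filter_upwards [hae] with ω hω
    change (ω ∈ ⋂ i ∈ S, g i ⁻¹' sets i) = (ω ∈ ⋂ i ∈ S, f i ⁻¹' sets i)
    simp only [Set.mem_iInter, Set.mem_preimage, eq_iff_iff]
    constructor
    · intro H i hi; rw [hω i hi]; exact H i hi
    · intro H i hi; rw [← hω i hi]; exact H i hi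
  rw [h2, h S hsets]
  exact Finset.prod_congr rfl fun i _ => measure_congr (h1 i)

lemma blocks_indepFun {Ω κ ι : Type*} [MeasurableSpace Ω] {μ : Measure Ω}
    {F : κ → Ω → ℝ} (hFmeas : ∀ k, Measurable (F k))
    (hindep : iIndepFun F μ)
    {blk : ι → Finset κ} (hdisj : ∀ i j, i ≠ j → Disjoint (blk i) (blk j))
    {T : ι → Ω → ℝ}
    (hT : ∀ i, ∃ g : ({k // k ∈ blk i} → ℝ) → ℝ, Measurable g ∧
      T i = fun ω => g (fun j => F j.1 ω))
    {k : ι} {s : Finset ι} (hk : k ∉ s) :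
    IndepFun (T k) (fun ω => ∑ i ∈ s, T i ω) μ := by
  classical
  choose g hgm hgT using hT
  have hdisj2 : Disjoint (blk k) (s.biUnion blk) := by
    rw [Finset.disjoint_biUnion_right]
    intro i hi
    exact hdisj k i (by rintro rfl; exact hk hi)
  have h2 := hindep.indepFun_finset (blk k) (s.biUnion blk) hdisj2 hFmeas
  set ψ : ({x // x ∈ s.biUnion blk} → ℝ) → ℝ :=
    fun v => ∑ i ∈ s.attach, g i.1 (fun j => v ⟨j.1, Finset.mem_biUnion.mpr ⟨i.1, i.2, j.2⟩⟩)
    with hψ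
  have hψm : Measurable ψ :=
    Finset.measurable_sum _ fun i _ =>
      (hgm i.1).comp (measurable_pi_lambda _ fun j => measurable_pi_apply _)
  have h3 := h2.comp (hgm k) hψm
  have e1 : (g k) ∘ (fun a (i : blk k) => F i.1 a) = T k := by
    rw [hgT k]; rfl
  have e2 : ψ ∘ (fun a (i : (s.biUnion blk : Finset κ)) => F i.1 a)
      = fun ω => ∑ i ∈ s, T i ω := by
    funext ω
    show ∑ i ∈ s.attach, g i.1 (fun j => F j.1 ω) = ∑ i ∈ s, T i ω
    rw [← Finset.sum_attach s (fun i => T i ω)]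
    exact Finset.sum_congr rfl fun j _ => (congrFun (hgT j.1) ω).symm
  rw [e1, e2] at h3
  exact h3

lemma blocks_integrable_mgf {Ω ι : Type*} [MeasurableSpace Ω] {μ : Measure Ω}
    [IsProbabilityMeasure μ] {T : ι → Ω → ℝ} {t : ℝ}
    (hpair : ∀ (k : ι) (s : Finset ι), k ∉ s → IndepFun (T k) (fun ω => ∑ i ∈ s, T i ω) μ)
    (s : Finset ι) (hint : ∀ i ∈ s, Integrable (fun ω => Real.exp (t * T i ω)) μ) :
    Integrable (fun ω => Real.exp (t * ∑ i ∈ s, T i ω)) μ ∧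
      ∫ ω, Real.exp (t * ∑ i ∈ s, T i ω) ∂μ = ∏ i ∈ s, ∫ ω, Real.exp (t * T i ω) ∂μ := by
  classical
  induction s using Finset.induction_on with
  | empty => refine ⟨?_, ?_⟩ <;> simp
  | @insert k s hk ih =>
    have hint' : ∀ i ∈ s, Integrable (fun ω => Real.exp (t * T i ω)) μ :=
      fun i hi => hint i (Finset.mem_insert_of_mem hi)
    obtain ⟨ih1, ih2⟩ := ih hint'
    have hintk := hint k (Finset.mem_insert_self k s)
    have hexp := (hpair k s hk).exp_mul t t
    have heq : (fun ω => Real.exp (t * ∑ i ∈ insert k s, T i ω)) =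
        fun ω => Real.exp (t * T k ω) * Real.exp (t * ∑ i ∈ s, T i ω) := by
      funext ω; rw [Finset.sum_insert hk, mul_add, Real.exp_add]
    constructor
    · rw [heq]; exact hexp.integrable_mul hintk ih1
    · rw [heq, hexp.integral_fun_mul_eq_mul_integral hintk.aestronglyMeasurable ih1.aestronglyMeasurable, ih2,
        Finset.prod_insert hk]

lemma ab_term_bound {Ω : Type*} [MeasurableSpace Ω] {μ : Measure Ω} [IsProbabilityMeasure μ]
    {X Y : Ω → ℝ} {αd βd : ℝ} (hβ0 : 0 < βd) (hβα : βd < αd) (hα1 : αd < 1)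
    (hmX : Measure.map X μ = bern αd) (hmY : Measure.map Y μ = bern βd)
    (hI : IndepFun X Y μ) :
    Integrable (fun ω => Real.exp ((1/2 : ℝ) * (aQ αd βd * (Y ω - X ω)))) μ ∧
      ∫ ω, Real.exp ((1/2 : ℝ) * (aQ αd βd * (Y ω - X ω))) ∂μ ≤ Real.exp (-(IQ αd βd)) := by
  have hα0 : 0 < αd := hβ0.trans hβα
  have hβ1 : βd < 1 := hβα.trans hα1
  set c := aQ αd βd / 2 with hc
  have hfY : Measurable fun u : ℝ => Real.exp (c * u) := (measurable_id'.const_mul c).exp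
  have hfX : Measurable fun u : ℝ => Real.exp (-c * u) := (measurable_id'.const_mul (-c)).exp
  obtain ⟨hintY, hvalY⟩ := integral_comp_bern hβ0.le hβ1.le hmY hfY
  obtain ⟨hintX, hvalX⟩ := integral_comp_bern hα0.le hα1.le hmX hfX
  have hIe : IndepFun (fun ω => Real.exp (c * Y ω)) (fun ω => Real.exp (-c * X ω)) μ :=
    hI.symm.exp_mul c (-c)
  have heq : (fun ω => Real.exp ((1/2 : ℝ) * (aQ αd βd * (Y ω - X ω)))) =
      fun ω => Real.exp (c * Y ω) * Real.exp (-c * X ω) := by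
    funext ω
    rw [← Real.exp_add]
    congr 1
    rw [hc]; ring
  constructor
  · rw [heq]; exact hIe.integrable_mul hintY hintX
  · rw [heq, hIe.integral_fun_mul_eq_mul_integral hintY.aestronglyMeasurable hintX.aestronglyMeasurable,
      hvalY, hvalX]
    simp only [mul_one, mul_zero, Real.exp_zero]
    rw [Real.exp_neg c]
    -- introduce square roots
    simp only [IQ]
    set sa := Real.sqrt αd with hsa
    set sb := Real.sqrt βd with hsb
    set sa' := Real.sqrt (1 - αd) with hsa'
    set sb' := Real.sqrt (1 - βd) with hsb'
    have h_sa : 0 < sa := by rw [hsa]; exact Real.sqrt_pos.mpr hα0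
    have h_sb : 0 < sb := by rw [hsb]; exact Real.sqrt_pos.mpr hβ0
    have h_sa' : 0 < sa' := by rw [hsa']; exact Real.sqrt_pos.mpr (by linarith)
    have h_sb' : 0 < sb' := by rw [hsb']; exact Real.sqrt_pos.mpr (by linarith)
    have e_a : sa ^ 2 = αd := by rw [hsa]; exact Real.sq_sqrt hα0.le
    have e_b : sb ^ 2 = βd := by rw [hsb]; exact Real.sq_sqrt hβ0.le
    have e_a' : sa' ^ 2 = 1 - αd := by rw [hsa']; exact Real.sq_sqrt (by linarith)
    have e_b' : sb' ^ 2 = 1 - βd := by rw [hsb']; exact Real.sq_sqrt (by linarith)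
    have hR : (0:ℝ) < αd * (1 - βd) / (βd * (1 - αd)) :=
      div_pos (mul_pos hα0 (by linarith)) (mul_pos hβ0 (by linarith))
    have h2 : Real.exp c * Real.exp c = αd * (1 - βd) / (βd * (1 - αd)) := by
      rw [← Real.exp_add, hc, add_halves]
      simp only [aQ]
      exact Real.exp_log hR
    have hec : Real.exp c = sa * sb' / (sb * sa') := by
      have h3 : (sa * sb' / (sb * sa')) ^ 2 = αd * (1 - βd) / (βd * (1 - αd)) := by
        rw [div_pow, mul_pow, mul_pow, e_a, e_b', e_b, e_a']
      have h4 : 0 ≤ sa * sb' / (sb * sa') := by positivity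
      rw [← Real.sqrt_mul_self (Real.exp_pos c).le, h2, ← h3, Real.sqrt_sq h4]
    rw [hec]
    rw [← e_b', ← e_a', ← e_b, ← e_a]
    have key : (sb ^ 2 * (sa * sb' / (sb * sa')) + sb' ^ 2) *
        (sa ^ 2 * (sa * sb' / (sb * sa'))⁻¹ + sa' ^ 2) = (sa * sb + sa' * sb') ^ 2 := by
      field_simp
    rw [key]
    have hu0 : 0 ≤ sa * sb + sa' * sb' := by positivity
    have hsum1 : sa ^ 2 + sa' ^ 2 = 1 := by rw [e_a, e_a']; ring
    have hsum2 : sb ^ 2 + sb' ^ 2 = 1 := by rw [e_b, e_b']; ring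
    have hle : sa * sb + sa' * sb' ≤ 1 - (sa - sb) ^ 2 / 2 := by
      nlinarith [sq_nonneg (sa' - sb')]
    have hexp2 : 1 - (sa - sb) ^ 2 / 2 ≤ Real.exp (-((sa - sb) ^ 2 / 2)) := by
      have := Real.add_one_le_exp (-((sa - sb) ^ 2 / 2)); linarith
    calc (sa * sb + sa' * sb') ^ 2 ≤ (Real.exp (-((sa - sb) ^ 2 / 2))) ^ 2 :=
          pow_le_pow_left₀ hu0 (hle.trans hexp2) 2
      _ = Real.exp (-(sa - sb) ^ 2) := by
          rw [sq, ← Real.exp_add]; congr 1; ring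

lemma rating_term_bound {Ω : Type*} [MeasurableSpace Ω] {μ : Measure Ω} [IsProbabilityMeasure μ]
    {X Y : Ω → ℝ} {p θ : ℝ} (hp0 : 0 ≤ p) (hp1 : p ≤ 1) (hθ0 : 0 < θ) (hθ2 : θ < 1/2)
    (hmX : Measure.map X μ = bern p) (hmY : Measure.map Y μ = bern θ)
    (hI : IndepFun X Y μ) :
    Integrable (fun ω => Real.exp ((1/2 : ℝ) * (bQ θ * (X ω * (2 * Y ω - 1))))) μ ∧
      ∫ ω, Real.exp ((1/2 : ℝ) * (bQ θ * (X ω * (2 * Y ω - 1)))) ∂μ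
        ≤ Real.exp (-(p * IθQ θ)) := by
  have hθ1 : θ < 1 := by linarith
  set c := bQ θ / 2 with hc
  have hg : Measurable fun v : ℝ => Real.exp (c * (2 * v - 1)) :=
    (((measurable_id'.const_mul 2).sub_const 1).const_mul c).exp
  obtain ⟨hintY, hvalY⟩ := integral_comp_bern hθ0.le hθ1.le hmY hg
  obtain ⟨hintX0, hvalX0⟩ := integral_comp_bern hp0 hp1 hmX measurable_id
  have hintX : Integrable X μ := by simpa using hintX0
  have hvalX : ∫ ω, X ω ∂μ = p := by simpa using hvalX0
  have h01 : ∀ᵐ ω ∂μ, X ω = 0 ∨ X ω = 1 := ae01_of_map_bern hp0 hp1 hmX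
  have hIg : IndepFun X (fun ω => Real.exp (c * (2 * Y ω - 1))) μ := by
    have := hI.comp measurable_id hg
    exact this
  have hintXg : Integrable (fun ω => X ω * Real.exp (c * (2 * Y ω - 1))) μ := by
    have := hIg.integrable_mul hintX hintY
    exact this
  have heq : (fun ω => Real.exp ((1/2 : ℝ) * (bQ θ * (X ω * (2 * Y ω - 1))))) =ᵐ[μ]
      (fun ω => (1 - X ω) + X ω * Real.exp (c * (2 * Y ω - 1))) := by
    filter_upwards [h01] with ω hω
    rcases hω with h | h <;> rw [h]
    · simp
    · have harg : (1/2 : ℝ) * (bQ θ * (1 * (2 * Y ω - 1))) = c * (2 * Y ω - 1) := by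
        rw [hc]; ring
      rw [harg]; norm_num
  have hintL : Integrable (fun ω => (1 - X ω) + X ω * Real.exp (c * (2 * Y ω - 1))) μ :=
    ((integrable_const 1).sub hintX).add hintXg
  have hint1 : Integrable (fun ω => 1 - X ω) μ := (integrable_const 1).sub hintX
  constructor
  · exact hintL.congr heq.symm
  · rw [integral_congr_ae heq,
      integral_add hint1 hintXg,
      integral_sub (integrable_const 1) hintX,
      hIg.integral_fun_mul_eq_mul_integral hintX.aestronglyMeasurable hintY.aestronglyMeasurable,
      hvalX, hvalY, integral_const]
    simp only [measure_univ, probReal_univ, ENNReal.toReal_one, smul_eq_mul, one_mul]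
    have harg1 : c * (2 * (1:ℝ) - 1) = c := by ring
    have harg2 : c * (2 * (0:ℝ) - 1) = -c := by ring
    rw [harg1, harg2, Real.exp_neg]
    set st := Real.sqrt θ with hst
    set st' := Real.sqrt (1 - θ) with hst'
    have hst0 : 0 < st := by rw [hst]; exact Real.sqrt_pos.mpr hθ0
    have hst'0 : 0 < st' := by rw [hst']; exact Real.sqrt_pos.mpr (by linarith)
    have e_t : st ^ 2 = θ := by rw [hst]; exact Real.sq_sqrt hθ0.le
    have e_t' : st' ^ 2 = 1 - θ := by rw [hst']; exact Real.sq_sqrt (by linarith)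
    have hI0 : (0:ℝ) < (1 - θ) / θ := div_pos (by linarith) hθ0
    have h2 : Real.exp c * Real.exp c = (1 - θ) / θ := by
      rw [← Real.exp_add, hc, add_halves]
      simp only [bQ]
      exact Real.exp_log hI0
    have hec : Real.exp c = st' / st := by
      have h3 : (st' / st) ^ 2 = (1 - θ) / θ := by rw [div_pow, e_t, e_t']
      have h4 : 0 ≤ st' / st := by positivity
      rw [← Real.sqrt_mul_self (Real.exp_pos c).le, h2, ← h3, Real.sqrt_sq h4]
    rw [hec]
    have key : θ * (st' / st) + (1 - θ) * (st' / st)⁻¹ = 2 * (st * st') := by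
      rw [← e_t', ← e_t]
      field_simp
      ring
    rw [key]
    have hIθ : IθQ θ = 1 - 2 * (st * st') := by
      simp only [IθQ]
      rw [← hst, ← hst']
      linear_combination e_t' + e_t
    have hfin : 1 - p + p * (2 * (st * st')) = 1 - p * IθQ θ := by rw [hIθ]; ring
    rw [hfin]
    have := Real.add_one_le_exp (-(p * IθQ θ))
    linarith

theorem local_likelihood_gap_bound
    {Ω : Type*} [MeasurableSpace Ω] (μ : Measure Ω) [IsProbabilityMeasure μ]
    (W : ℕ) (hW : 2 ≤ W)
    (α β : ℕ → ℝ)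
    (hαβ : ∀ d ∈ Finset.Icc 2 W, 0 < β d ∧ β d < α d ∧ α d < 1)
    (K : ℕ → ℕ) (L : ℕ)
    (p θ : ℝ) (hp : p ∈ Set.Icc (0:ℝ) 1) (hθ : θ ∈ Set.Ioo (0:ℝ) (1/2))
    (A B : ℕ → ℕ → Ω → ℝ) (P Θv : ℕ → Ω → ℝ)
    (hA : ∀ d ∈ Finset.Icc 2 W, ∀ j < K d, Measure.map (A d j) μ = bern (α d))
    (hB : ∀ d ∈ Finset.Icc 2 W, ∀ j < K d, Measure.map (B d j) μ = bern (β d))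
    (hP : ∀ i < L, Measure.map (P i) μ = bern p)
    (hΘ : ∀ i < L, Measure.map (Θv i) μ = bern θ)
    (hindep : iIndepFun
      (Sum.elim
        (Sum.elim
          (fun x : {x : ℕ × ℕ // x.1 ∈ Finset.Icc 2 W ∧ x.2 < K x.1} => A x.1.1 x.1.2)
          (fun x : {x : ℕ × ℕ // x.1 ∈ Finset.Icc 2 W ∧ x.2 < K x.1} => B x.1.1 x.1.2))
        (Sum.elim (fun i : Fin L => P i) (fun i : Fin L => Θv i))) μ)
    (n : ℕ) (hn : 2 ≤ n) (ε τ : ℝ) (hε : 0 < ε) (hτ : 0 < τ) (hτε : τ ≤ ε)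
    (hinfo : (1 + ε) * Real.log n ≤
      (∑ d ∈ Finset.Icc 2 W, (K d : ℝ) * IQ (α d) (β d)) + (L : ℝ) * p * IθQ θ) :
    (μ {ω | -(τ * Real.log n) ≤ (∑ d ∈ Finset.Icc 2 W, aQ (α d) (β d) *
            ∑ j ∈ Finset.range (K d), (B d j ω - A d j ω))
          + bQ θ * ∑ i ∈ Finset.range L, P i ω * (2 * Θv i ω - 1)}
      ≤ ENNReal.ofReal ((n : ℝ) ^ (τ / 2 - 1 - ε)))
    ∧ (n : ℝ) ^ (τ / 2 - 1 - ε) ≤ (n : ℝ) ^ (-(1 + ε / 2)) := by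
  classical
  obtain ⟨hp0, hp1⟩ := hp
  obtain ⟨hθ0, hθ2⟩ := hθ
  have hn1 : (1:ℝ) ≤ (n:ℝ) := by exact_mod_cast (by omega : 1 ≤ n)
  have hn0 : (0:ℝ) < (n:ℝ) := by linarith
  refine ⟨?_, Real.rpow_le_rpow_of_exponent_le hn1 (by linarith)⟩
  -- measurable modifications
  obtain ⟨A', B', P', Θ', hA'm, hB'm, hP'm, hΘ'm, hindep', hA'map, hB'map, hP'map, hΘ'map, hae⟩ :
      ∃ (A' B' : {x : ℕ × ℕ // x.1 ∈ Finset.Icc 2 W ∧ x.2 < K x.1} → Ω → ℝ)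
        (P' Θ' : Fin L → Ω → ℝ),
        (∀ x, Measurable (A' x)) ∧ (∀ x, Measurable (B' x)) ∧
        (∀ i, Measurable (P' i)) ∧ (∀ i, Measurable (Θ' i)) ∧
        iIndepFun (Sum.elim (Sum.elim A' B') (Sum.elim P' Θ')) μ ∧
        (∀ x, Measure.map (A' x) μ = bern (α x.1.1)) ∧
        (∀ x, Measure.map (B' x) μ = bern (β x.1.1)) ∧
        (∀ i, Measure.map (P' i) μ = bern p) ∧
        (∀ i, Measure.map (Θ' i) μ = bern θ) ∧
        (∀ᵐ ω ∂μ, (∀ x, A' x ω = A x.1.1 x.1.2 ω) ∧ (∀ x, B' x ω = B x.1.1 x.1.2 ω) ∧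
          (∀ i, P' i ω = P (i : ℕ) ω) ∧ (∀ i, Θ' i ω = Θv (i : ℕ) ω)) := by
    have hax : ∀ x : {x : ℕ × ℕ // x.1 ∈ Finset.Icc 2 W ∧ x.2 < K x.1},
        0 < α x.1.1 ∧ α x.1.1 < 1 ∧ 0 < β x.1.1 ∧ β x.1.1 < 1 := by
      intro x
      obtain ⟨h1, h2, h3⟩ := hαβ x.1.1 x.2.1
      exact ⟨h1.trans h2, h3, h1, h2.trans h3⟩
    have hAae : ∀ x : {x : ℕ × ℕ // x.1 ∈ Finset.Icc 2 W ∧ x.2 < K x.1},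
        AEMeasurable (A x.1.1 x.1.2) μ := fun x =>
      aemeasurable_of_map_bern (hax x).1.le (hax x).2.1.le (hA x.1.1 x.2.1 x.1.2 x.2.2)
    have hBae : ∀ x : {x : ℕ × ℕ // x.1 ∈ Finset.Icc 2 W ∧ x.2 < K x.1},
        AEMeasurable (B x.1.1 x.1.2) μ := fun x =>
      aemeasurable_of_map_bern (hax x).2.2.1.le (hax x).2.2.2.le (hB x.1.1 x.2.1 x.1.2 x.2.2)
    have hPae : ∀ i : Fin L, AEMeasurable (P i) μ := fun i =>
      aemeasurable_of_map_bern hp0 hp1 (hP i i.2)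
    have hΘae : ∀ i : Fin L, AEMeasurable (Θv i) μ := fun i =>
      aemeasurable_of_map_bern hθ0.le (by linarith : θ ≤ 1) (hΘ i i.2)
    refine ⟨fun x => (hAae x).mk (A x.1.1 x.1.2), fun x => (hBae x).mk (B x.1.1 x.1.2),
      fun i => (hPae i).mk (P i), fun i => (hΘae i).mk (Θv i),
      fun x => (hAae x).measurable_mk, fun x => (hBae x).measurable_mk,
      fun i => (hPae i).measurable_mk, fun i => (hΘae i).measurable_mk, ?_, ?_, ?_, ?_, ?_, ?_⟩
    · refine iIndepFun_congr_ae hindep ?_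
      rintro ((x | x) | (i | i))
      exacts [(hAae x).ae_eq_mk, (hBae x).ae_eq_mk, (hPae i).ae_eq_mk, (hΘae i).ae_eq_mk]
    · intro x
      show Measure.map ((hAae x).mk (A x.1.1 x.1.2)) μ = bern (α x.1.1)
      rw [← Measure.map_congr (hAae x).ae_eq_mk]
      exact hA x.1.1 x.2.1 x.1.2 x.2.2
    · intro x
      show Measure.map ((hBae x).mk (B x.1.1 x.1.2)) μ = bern (β x.1.1)
      rw [← Measure.map_congr (hBae x).ae_eq_mk]
      exact hB x.1.1 x.2.1 x.1.2 x.2.2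
    · intro i
      show Measure.map ((hPae i).mk (P i)) μ = bern p
      rw [← Measure.map_congr (hPae i).ae_eq_mk]
      exact hP i i.2
    · intro i
      show Measure.map ((hΘae i).mk (Θv i)) μ = bern θ
      rw [← Measure.map_congr (hΘae i).ae_eq_mk]
      exact hΘ i i.2
    · have e1 : ∀ᵐ ω ∂μ, ∀ x, (hAae x).mk (A x.1.1 x.1.2) ω = A x.1.1 x.1.2 ω :=
        ae_all_iff.mpr fun x => ((hAae x).ae_eq_mk).symm
      have e2 : ∀ᵐ ω ∂μ, ∀ x, (hBae x).mk (B x.1.1 x.1.2) ω = B x.1.1 x.1.2 ω :=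
        ae_all_iff.mpr fun x => ((hBae x).ae_eq_mk).symm
      have e3 : ∀ᵐ ω ∂μ, ∀ i, (hPae i).mk (P i) ω = P (i : ℕ) ω :=
        ae_all_iff.mpr fun i => ((hPae i).ae_eq_mk).symm
      have e4 : ∀ᵐ ω ∂μ, ∀ i, (hΘae i).mk (Θv i) ω = Θv (i : ℕ) ω :=
        ae_all_iff.mpr fun i => ((hΘae i).ae_eq_mk).symm
      filter_upwards [e1, e2, e3, e4] with ω f1 f2 f3 f4
      exact ⟨f1, f2, f3, f4⟩
  -- blocks and term variables
  set blk : ({x : ℕ × ℕ // x.1 ∈ Finset.Icc 2 W ∧ x.2 < K x.1} ⊕ Fin L) →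
      Finset (({x : ℕ × ℕ // x.1 ∈ Finset.Icc 2 W ∧ x.2 < K x.1} ⊕
        {x : ℕ × ℕ // x.1 ∈ Finset.Icc 2 W ∧ x.2 < K x.1}) ⊕ (Fin L ⊕ Fin L)) :=
    Sum.elim (fun x => {Sum.inl (Sum.inl x), Sum.inl (Sum.inr x)})
      (fun i => {Sum.inr (Sum.inl i), Sum.inr (Sum.inr i)}) with hblk
  set T : ({x : ℕ × ℕ // x.1 ∈ Finset.Icc 2 W ∧ x.2 < K x.1} ⊕ Fin L) → Ω → ℝ :=
    Sum.elim (fun x ω => aQ (α x.1.1) (β x.1.1) * (B' x ω - A' x ω))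
      (fun i ω => bQ θ * (P' i ω * (2 * Θ' i ω - 1))) with hT
  have hF'meas : ∀ k, Measurable ((Sum.elim (Sum.elim A' B') (Sum.elim P' Θ')) k) := by
    rintro ((x | x) | (i | i))
    exacts [hA'm x, hB'm x, hP'm i, hΘ'm i]
  have hdisj : ∀ i j, i ≠ j → Disjoint (blk i) (blk j) := by
    intro i j hne
    rcases i with x | x <;> rcases j with y | y <;>
      simp only [hblk, Sum.elim_inl, Sum.elim_inr, Finset.disjoint_left, Finset.mem_insert,
        Finset.mem_singleton] <;>
      rintro a (rfl | rfl) (h | h) <;>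
      first
        | (cases h; done)
        | (simp only [Sum.inl.injEq, Sum.inr.injEq] at h
           first
             | (cases h; done)
             | exact hne (by rw [h])
             | (exact hne (by rw [Fin.val_injective h]))
             | (exact hne (by rw [Subtype.ext h])))
  have hTrep : ∀ i, ∃ g : ({k // k ∈ blk i} → ℝ) → ℝ, Measurable g ∧
      T i = fun ω => g (fun j => (Sum.elim (Sum.elim A' B') (Sum.elim P' Θ')) j.1 ω) := by
    rintro (x | i)
    · have hm1 : Sum.inl (Sum.inr x) ∈ blk (Sum.inl x) := by rw [hblk]; simp
      have hm2 : Sum.inl (Sum.inl x) ∈ blk (Sum.inl x) := by rw [hblk]; simp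
      refine ⟨fun v => aQ (α x.1.1) (β x.1.1) * (v ⟨_, hm1⟩ - v ⟨_, hm2⟩), ?_, ?_⟩
      · fun_prop
      · rw [hT]; rfl
    · have hm1 : Sum.inr (Sum.inl i) ∈ blk (Sum.inr i) := by rw [hblk]; simp
      have hm2 : Sum.inr (Sum.inr i) ∈ blk (Sum.inr i) := by rw [hblk]; simp
      refine ⟨fun v => bQ θ * (v ⟨_, hm1⟩ * (2 * v ⟨_, hm2⟩ - 1)), ?_, ?_⟩
      · fun_prop
      · rw [hT]; rfl
  have hpair : ∀ (k) (s : Finset _), k ∉ s → IndepFun (T k) (fun ω => ∑ i ∈ s, T i ω) μ :=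
    fun k s hk => blocks_indepFun hF'meas hindep' hdisj hTrep hk
  -- per-term bounds
  have habk : ∀ x : {x : ℕ × ℕ // x.1 ∈ Finset.Icc 2 W ∧ x.2 < K x.1},
      Integrable (fun ω => Real.exp ((1/2 : ℝ) * T (Sum.inl x) ω)) μ ∧
      ∫ ω, Real.exp ((1/2 : ℝ) * T (Sum.inl x) ω) ∂μ ≤
        Real.exp (-(IQ (α x.1.1) (β x.1.1))) := by
    intro x
    obtain ⟨h1, h2, h3⟩ := hαβ x.1.1 x.2.1
    have hTx : T (Sum.inl x) = fun ω => aQ (α x.1.1) (β x.1.1) * (B' x ω - A' x ω) := by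
      rw [hT]; rfl
    have hIx : IndepFun (A' x) (B' x) μ :=
      hindep'.indepFun (show (Sum.inl (Sum.inl x) : _) ≠ Sum.inl (Sum.inr x) by simp)
    have := ab_term_bound h1 h2 h3 (hA'map x) (hB'map x) hIx
    simpa only [hTx] using this
  have hrati : ∀ i : Fin L,
      Integrable (fun ω => Real.exp ((1/2 : ℝ) * T (Sum.inr i) ω)) μ ∧
      ∫ ω, Real.exp ((1/2 : ℝ) * T (Sum.inr i) ω) ∂μ ≤ Real.exp (-(p * IθQ θ)) := by
    intro i
    have hTi : T (Sum.inr i) = fun ω => bQ θ * (P' i ω * (2 * Θ' i ω - 1)) := by rw [hT]; rfl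
    have hIi : IndepFun (P' i) (Θ' i) μ :=
      hindep'.indepFun (show (Sum.inr (Sum.inl i) : _) ≠ Sum.inr (Sum.inr i) by simp)
    have := rating_term_bound hp0 hp1 hθ0 hθ2 (hP'map i) (hΘ'map i) hIi
    simpa only [hTi] using this
  -- index finsets
  set s₁ : Finset {x : ℕ × ℕ // x.1 ∈ Finset.Icc 2 W ∧ x.2 < K x.1} :=
    ((Finset.Icc 2 W) ×ˢ (Finset.range ((Finset.Icc 2 W).sup K))).subtype
      (fun x => x.1 ∈ Finset.Icc 2 W ∧ x.2 < K x.1) with hs₁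
  set s : Finset ({x : ℕ × ℕ // x.1 ∈ Finset.Icc 2 W ∧ x.2 < K x.1} ⊕ Fin L) :=
    s₁.disjSum Finset.univ with hs
  have sum_pairs : ∀ G : ℕ → ℕ → ℝ, (∑ x ∈ s₁, G x.1.1 x.1.2)
      = ∑ d ∈ Finset.Icc 2 W, ∑ j ∈ Finset.range (K d), G d j := by
    intro G
    rw [hs₁]
    refine (Finset.sum_subtype_eq_sum_filter (fun y : ℕ × ℕ => G y.1 y.2)
      (s := (Finset.Icc 2 W) ×ˢ (Finset.range ((Finset.Icc 2 W).sup K)))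
      (p := fun x => x.1 ∈ Finset.Icc 2 W ∧ x.2 < K x.1)).trans ?_
    rw [Finset.sum_filter, Finset.sum_product]
    refine Finset.sum_congr rfl fun d hd => ?_
    have hKM : K d ≤ (Finset.Icc 2 W).sup K := Finset.le_sup hd
    have h1 : ∀ j ∈ Finset.range ((Finset.Icc 2 W).sup K),
        (if (d, j).1 ∈ Finset.Icc 2 W ∧ (d, j).2 < K (d, j).1 then G (d, j).1 (d, j).2 else 0)
          = (if j < K d then G d j else 0) := by
      intro j _
      have hcond : ((d, j).1 ∈ Finset.Icc 2 W ∧ (d, j).2 < K (d, j).1) ↔ (j < K d) := by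
        simp [hd]
      rw [if_congr hcond rfl rfl]
    rw [Finset.sum_congr rfl h1, ← Finset.sum_filter]
    congr 1
    ext j
    simp only [Finset.mem_filter, Finset.mem_range]
    exact ⟨fun h => h.2, fun h => ⟨lt_of_lt_of_le h hKM, h⟩⟩
  -- the cost function
  have hsum_c : (∑ k ∈ s, (Sum.elim
        (fun x : {x : ℕ × ℕ // x.1 ∈ Finset.Icc 2 W ∧ x.2 < K x.1} => IQ (α x.1.1) (β x.1.1))
        (fun _ : Fin L => p * IθQ θ)) k)
      = (∑ d ∈ Finset.Icc 2 W, (K d : ℝ) * IQ (α d) (β d)) + (L : ℝ) * p * IθQ θ := by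
    rw [hs, Finset.sum_disjSum]
    congr 1
    · calc (∑ x ∈ s₁, Sum.elim
            (fun x : {x : ℕ × ℕ // x.1 ∈ Finset.Icc 2 W ∧ x.2 < K x.1} => IQ (α x.1.1) (β x.1.1))
            (fun _ : Fin L => p * IθQ θ) (Sum.inl x))
          = ∑ x ∈ s₁, IQ (α x.1.1) (β x.1.1) := rfl
        _ = ∑ d ∈ Finset.Icc 2 W, ∑ j ∈ Finset.range (K d), IQ (α d) (β d) :=
            sum_pairs (fun d _ => IQ (α d) (β d))
        _ = ∑ d ∈ Finset.Icc 2 W, (K d : ℝ) * IQ (α d) (β d) :=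
            Finset.sum_congr rfl fun d _ => by
              rw [Finset.sum_const, Finset.card_range, nsmul_eq_mul]
    · calc (∑ i : Fin L, Sum.elim
            (fun x : {x : ℕ × ℕ // x.1 ∈ Finset.Icc 2 W ∧ x.2 < K x.1} => IQ (α x.1.1) (β x.1.1))
            (fun _ : Fin L => p * IθQ θ) (Sum.inr i))
          = ∑ _i : Fin L, p * IθQ θ := rfl
        _ = (L : ℝ) * p * IθQ θ := by
            rw [Finset.sum_const, Finset.card_univ, Fintype.card_fin, nsmul_eq_mul, ← mul_assoc]
  -- identification of the sum with the statement's expression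
  have hSeq : (fun ω => ∑ k ∈ s, T k ω) =ᵐ[μ]
      (fun ω => (∑ d ∈ Finset.Icc 2 W, aQ (α d) (β d) *
          ∑ j ∈ Finset.range (K d), (B d j ω - A d j ω))
        + bQ θ * ∑ i ∈ Finset.range L, P i ω * (2 * Θv i ω - 1)) := by
    filter_upwards [hae] with ω hω
    obtain ⟨hωA, hωB, hωP, hωΘ⟩ := hω
    rw [hs, Finset.sum_disjSum]
    congr 1
    · have h1 : ∀ x ∈ s₁, T (Sum.inl x) ω
          = aQ (α x.1.1) (β x.1.1) * (B x.1.1 x.1.2 ω - A x.1.1 x.1.2 ω) := by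
        intro x _
        have hTx : T (Sum.inl x) = fun ω => aQ (α x.1.1) (β x.1.1) * (B' x ω - A' x ω) := by
          rw [hT]; rfl
        simp only [hTx]
        rw [hωA x, hωB x]
      refine ((Finset.sum_congr rfl h1).trans
        ((sum_pairs (fun d j => aQ (α d) (β d) * (B d j ω - A d j ω))).trans ?_))
      exact Finset.sum_congr rfl fun d _ => (Finset.mul_sum _ _ _).symm
    · have h2 : ∀ i : Fin L, T (Sum.inr i) ω = bQ θ * (P (i : ℕ) ω * (2 * Θv (i : ℕ) ω - 1)) := by
        intro i
        have hTi : T (Sum.inr i) = fun ω => bQ θ * (P' i ω * (2 * Θ' i ω - 1)) := by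
          rw [hT]; rfl
        simp only [hTi]
        rw [hωP i, hωΘ i]
      refine ((Finset.sum_congr rfl fun i _ => h2 i).trans ?_)
      rw [← Finset.mul_sum]
      exact congrArg (fun z => bQ θ * z)
        (Fin.sum_univ_eq_sum_range (fun i => P i ω * (2 * Θv i ω - 1)) L)
  -- Chernoff
  have hint : ∀ k ∈ s, Integrable (fun ω => Real.exp ((1/2 : ℝ) * T k ω)) μ := by
    rintro (x | i) _
    · exact (habk x).1
    · exact (hrati i).1
  obtain ⟨hintS, hprodS⟩ := blocks_integrable_mgf hpair s hint
  have hbound : ∫ ω, Real.exp ((1/2 : ℝ) * ∑ k ∈ s, T k ω) ∂μ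
      ≤ Real.exp (-((1 + ε) * Real.log n)) := by
    rw [hprodS]
    have hstep : ∀ k ∈ s, ∫ ω, Real.exp ((1/2 : ℝ) * T k ω) ∂μ ≤
        Real.exp (-(Sum.elim
          (fun x : {x : ℕ × ℕ // x.1 ∈ Finset.Icc 2 W ∧ x.2 < K x.1} => IQ (α x.1.1) (β x.1.1))
          (fun _ : Fin L => p * IθQ θ) k)) := by
      rintro (x | i) _
      · exact (habk x).2
      · exact (hrati i).2
    calc ∏ k ∈ s, ∫ ω, Real.exp ((1/2 : ℝ) * T k ω) ∂μ
        ≤ ∏ k ∈ s, Real.exp (-(Sum.elim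
            (fun x : {x : ℕ × ℕ // x.1 ∈ Finset.Icc 2 W ∧ x.2 < K x.1} => IQ (α x.1.1) (β x.1.1))
            (fun _ : Fin L => p * IθQ θ) k)) :=
          Finset.prod_le_prod (fun k _ => integral_nonneg fun ω => (Real.exp_pos _).le) hstep
      _ = Real.exp (∑ k ∈ s, -(Sum.elim
            (fun x : {x : ℕ × ℕ // x.1 ∈ Finset.Icc 2 W ∧ x.2 < K x.1} => IQ (α x.1.1) (β x.1.1))
            (fun _ : Fin L => p * IθQ θ) k)) := (Real.exp_sum s _).symm
      _ ≤ Real.exp (-((1 + ε) * Real.log n)) := by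
          rw [Real.exp_le_exp, Finset.sum_neg_distrib, hsum_c]
          exact neg_le_neg hinfo
  have hset : μ {ω | -(τ * Real.log n) ≤ (∑ d ∈ Finset.Icc 2 W, aQ (α d) (β d) *
          ∑ j ∈ Finset.range (K d), (B d j ω - A d j ω))
        + bQ θ * ∑ i ∈ Finset.range L, P i ω * (2 * Θv i ω - 1)}
      = μ {ω | -(τ * Real.log n) ≤ ∑ k ∈ s, T k ω} := by
    apply measure_congr
    filter_upwards [hSeq] with ω hω
    change (-(τ * Real.log n) ≤ _) = (-(τ * Real.log n) ≤ _)
    rw [← hω]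
  rw [hset]
  have hch := measure_ge_le_exp_mul_mgf (μ := μ) (X := fun ω => ∑ k ∈ s, T k ω)
    (t := (1/2 : ℝ)) (-(τ * Real.log n)) (by norm_num) hintS
  have hmgf_le : mgf (fun ω => ∑ k ∈ s, T k ω) μ (1/2) ≤ Real.exp (-((1 + ε) * Real.log n)) := by
    have h0 : mgf (fun ω => ∑ k ∈ s, T k ω) μ (1/2)
        = ∫ ω, Real.exp ((1/2 : ℝ) * ∑ k ∈ s, T k ω) ∂μ := rfl
    rw [h0]; exact hbound
  have hfinal : Real.exp (-(1/2 : ℝ) * -(τ * Real.log n)) * mgf (fun ω => ∑ k ∈ s, T k ω) μ (1/2)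
      ≤ (n : ℝ) ^ (τ / 2 - 1 - ε) := by
    have h1 : Real.exp (-(1/2 : ℝ) * -(τ * Real.log n)) * mgf (fun ω => ∑ k ∈ s, T k ω) μ (1/2)
        ≤ Real.exp (-(1/2 : ℝ) * -(τ * Real.log n)) * Real.exp (-((1 + ε) * Real.log n)) :=
      mul_le_mul_of_nonneg_left hmgf_le (Real.exp_pos _).le
    refine h1.trans ?_
    rw [← Real.exp_add, Real.rpow_def_of_pos hn0]
    apply le_of_eq
    congr 1
    ring
  rw [← ENNReal.ofReal_toReal (measure_ne_top μ {ω | -(τ * Real.log n) ≤ ∑ k ∈ s, T k ω})]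
  exact ENNReal.ofReal_le_ofReal (hch.trans hfinal)
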